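/- Let (G,γ) be a Z/3Z-colored graph, let G̃ be its development, and let G̃' be a subgraph of G̃ that is a Laman circuit whose orbit O = G̃' ∪ α₁(G̃') ∪ α₂(G̃') under the Z/3Z-action is connected. Then O has at least 2·|V(O)| edges, where |V(O)| is the number of vertices of O; consequently π(O) has non-trivial Z/3Z-image and violates the count m' ≤ 2n'−1. -/

import Mathlib

/-- A finite directed multigraph: each edge has a tail and a head vertex. -/
structure Multigraph (V : Type) (E : Type) where
  tail : E → V
  head : E → V

namespace Multigraph

variable {V E Γ : Type}

/-- The starting vertex of a step `(e, b)`: the edge `e` traversed forwards if `b = true`,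
backwards otherwise. -/
def stepSrc (G : Multigraph V E) (s : E × Bool) : V :=
  if s.2 then G.tail s.1 else G.head s.1

/-- The ending vertex of a step `(e, b)`. -/
def stepDst (G : Multigraph V E) (s : E × Bool) : V :=
  if s.2 then G.head s.1 else G.tail s.1

/-- `G.WalkFrom u v w`: the list of steps `w` is a walk from `u` to `v`
(edge orientations ignored: each step records an edge and a traversal direction). -/
inductive WalkFrom (G : Multigraph V E) : V → V → List (E × Bool) → Prop
  | nil (v : V) : WalkFrom G v v []
  | cons {v : V} (s : E × Bool) {rest : List (E × Bool)} :
      WalkFrom G (G.stepDst s) v rest → WalkFrom G (G.stepSrc s) v (s :: rest)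

/-- `ρ` of a walk: the sum of the colors of forward-traversed edges minus
the sum of the colors of backward-traversed edges. -/
def rho [AddCommGroup Γ] (γ : E → Γ) (w : List (E × Bool)) : Γ :=
  (w.map fun s => if s.2 then γ s.1 else -γ s.1).sum

/-- A cycle contained in the subgraph with edge set `S`: a nonempty closed walk,
with no repeated edges and no repeated vertices. -/
def IsCycleIn (G : Multigraph V E) (S : Finset E) (w : List (E × Bool)) : Prop :=
  (∃ v, G.WalkFrom v v w) ∧ w ≠ [] ∧ (∀ s ∈ w, s.1 ∈ S) ∧
    (w.map Prod.fst).Nodup ∧ (w.map G.stepSrc).Nodup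

/-- The subgraph with edge set `S` has trivial `Γ`-image: `ρ(C) = 0` for every
cycle `C` contained in it. -/
def TrivialImage [AddCommGroup Γ] (G : Multigraph V E) (γ : E → Γ) (S : Finset E) : Prop :=
  ∀ w, G.IsCycleIn S w → rho γ w = 0

/-- The vertices spanned by an edge set. -/
def verts [DecidableEq V] (G : Multigraph V E) (S : Finset E) : Finset V :=
  S.image G.tail ∪ S.image G.head

/-- The edge set `S` is `(k, ℓ)`-sparse: every nonempty subgraph with `n'` vertices and
`m'` edges satisfies `m' ≤ k n' - ℓ`. -/
def Sparse [DecidableEq V] (G : Multigraph V E) (k ℓ : ℤ) (S : Finset E) : Prop :=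
  ∀ S' ⊆ S, S'.Nonempty → (S'.card : ℤ) ≤ k * ((G.verts S').card : ℤ) - ℓ

/-- The edge set `S` is a `(k, ℓ)`-graph (as a subgraph on its spanned vertices):
it is `(k, ℓ)`-sparse and has exactly `k n - ℓ` edges. -/
def Tight [DecidableEq V] (G : Multigraph V E) (k ℓ : ℤ) (S : Finset E) : Prop :=
  G.Sparse k ℓ S ∧ (S.card : ℤ) = k * ((G.verts S).card : ℤ) - ℓ

/-- The edge set `S` is a `(k, ℓ)`-circuit: edge-minimal not `(k, ℓ)`-sparse. -/
def Circuit [DecidableEq V] [DecidableEq E] (G : Multigraph V E) (k ℓ : ℤ) (S : Finset E) :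
    Prop :=
  ¬ G.Sparse k ℓ S ∧ ∀ e ∈ S, G.Sparse k ℓ (S.erase e)

/-- A `(k, ℓ)`-basis of `G`: a maximal `(k, ℓ)`-sparse edge set. -/
def Basis [DecidableEq V] (G : Multigraph V E) (k ℓ : ℤ) (L : Finset E) : Prop :=
  G.Sparse k ℓ L ∧ ∀ L', L ⊆ L' → G.Sparse k ℓ L' → L' = L

/-- `C` is the fundamental `(k, ℓ)`-circuit of some edge `e ∉ L` with respect to the
`(k, ℓ)`-basis `L`: a `(k, ℓ)`-circuit contained in `L + e`. -/
def FundCircuit [DecidableEq V] [DecidableEq E] (G : Multigraph V E) (k ℓ : ℤ)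
    (L C : Finset E) : Prop :=
  G.Circuit k ℓ C ∧ ∃ e, e ∉ L ∧ C ⊆ insert e L

/-- The whole graph `G` is a `(k, ℓ)`-graph: `(k, ℓ)`-sparse, with exactly
`k n - ℓ` edges where `n` is the number of vertices of `G`. -/
def IsKLGraph [DecidableEq V] [Fintype V] [Fintype E] (G : Multigraph V E) (k ℓ : ℤ) : Prop :=
  G.Sparse k ℓ Finset.univ ∧ (Fintype.card E : ℤ) = k * (Fintype.card V : ℤ) - ℓ

/-- The colored subgraph with edge set `S` is Ross-sparse: nonempty subgraphs with trivial
`Γ`-image satisfy `m' ≤ 2n' - 3`, and those with non-trivial image satisfy `m' ≤ 2n' - 2`. -/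
def RossSparseOn [DecidableEq V] [AddCommGroup Γ] (G : Multigraph V E) (γ : E → Γ)
    (S : Finset E) : Prop :=
  ∀ S' ⊆ S, S'.Nonempty →
    (G.TrivialImage γ S' → (S'.card : ℤ) ≤ 2 * ((G.verts S').card : ℤ) - 3) ∧
    (¬ G.TrivialImage γ S' → (S'.card : ℤ) ≤ 2 * ((G.verts S').card : ℤ) - 2)

/-- The colored subgraph with edge set `S` is a Ross graph (on its spanned vertices):
Ross-sparse with exactly `2n - 2` edges. -/
def RossGraphOn [DecidableEq V] [AddCommGroup Γ] (G : Multigraph V E) (γ : E → Γ)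
    (S : Finset E) : Prop :=
  G.RossSparseOn γ S ∧ (S.card : ℤ) = 2 * ((G.verts S).card : ℤ) - 2

/-- The whole colored graph `(G, γ)` is a Ross graph: Ross-sparse with exactly `2n - 2`
edges, `n` being the number of vertices of `G`. -/
def RossGraph [DecidableEq V] [Fintype V] [Fintype E] [AddCommGroup Γ] (G : Multigraph V E)
    (γ : E → Γ) : Prop :=
  G.RossSparseOn γ Finset.univ ∧ (Fintype.card E : ℤ) = 2 * (Fintype.card V : ℤ) - 2

/-- The colored graph `(G, γ)` is cone-Laman-sparse: nonempty subgraphs with trivial image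
satisfy `m' ≤ 2n' - 3`, those with non-trivial image satisfy `m' ≤ 2n' - 1`. -/
def ConeLamanSparse [DecidableEq V] [AddCommGroup Γ] (G : Multigraph V E) (γ : E → Γ) : Prop :=
  ∀ S' : Finset E, S'.Nonempty →
    (G.TrivialImage γ S' → (S'.card : ℤ) ≤ 2 * ((G.verts S').card : ℤ) - 3) ∧
    (¬ G.TrivialImage γ S' → (S'.card : ℤ) ≤ 2 * ((G.verts S').card : ℤ) - 1)

/-- The whole colored graph `(G, γ)` is a cone-Laman graph: cone-Laman-sparse with exactly
`2n - 1` edges, `n` being the number of vertices of `G`. -/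
def ConeLamanGraph [DecidableEq V] [Fintype V] [Fintype E] [AddCommGroup Γ]
    (G : Multigraph V E) (γ : E → Γ) : Prop :=
  G.ConeLamanSparse γ ∧ (Fintype.card E : ℤ) = 2 * (Fintype.card V : ℤ) - 1

/-- A (simple) path from `u` to `v` using only edges in `S`: a walk visiting no vertex
twice. -/
def IsPathIn (G : Multigraph V E) (S : Finset E) (u v : V) (w : List (E × Bool)) : Prop :=
  G.WalkFrom u v w ∧ (∀ s ∈ w, s.1 ∈ S) ∧ (u :: w.map G.stepDst).Nodup

/-- `G` is connected. -/
def Connected (G : Multigraph V E) : Prop :=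
  ∀ u v : V, ∃ w : List (E × Bool), G.WalkFrom u v w

/-- `T` is a spanning tree of `G`: every pair of vertices is joined by a path in `T`,
and `T` contains no cycle. -/
def IsSpanningTree (G : Multigraph V E) (T : Finset E) : Prop :=
  (∀ u v : V, ∃ w, G.IsPathIn T u v w) ∧ ∀ w, ¬ G.IsCycleIn T w

/-- `T` is a spanning forest of `G`: a maximal acyclic edge set. -/
def IsSpanningForest (G : Multigraph V E) (T : Finset E) : Prop :=
  (∀ w, ¬ G.IsCycleIn T w) ∧
    ∀ T', T ⊆ T' → (∀ w, ¬ G.IsCycleIn T' w) → T' = T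

/-- In the tree `T` rooted at `r`, vertex `x` lies on the (unique) path from the root `r`
to `y`; i.e. `x` is an ancestor of `y`. -/
def Anc (G : Multigraph V E) (T : Finset E) (r x y : V) : Prop :=
  ∀ w, G.IsPathIn T r y w → x ∈ (r :: w.map G.stepDst)

/-- `a` is the least common ancestor of `i` and `j` in the tree `T` rooted at `r`:
the vertex where the paths from `i` to `r` and from `j` to `r` first converge. -/
def IsLCA (G : Multigraph V E) (T : Finset E) (r a i j : V) : Prop :=
  G.Anc T r a i ∧ G.Anc T r a j ∧ ∀ x, G.Anc T r x i → G.Anc T r x j → G.Anc T r x a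

/-- The development of a `ℤ/3ℤ`-colored graph: vertices `i_z`, and for each edge `ij`
with color `γ_ij` the three edges `i_z j_{z + γ_ij}`. -/
def Development (G : Multigraph V E) (γ : E → ZMod 3) :
    Multigraph (V × ZMod 3) (E × ZMod 3) where
  tail s := (G.tail s.1, s.2)
  head s := (G.head s.1, s.2 + γ s.1)

/-- The lift `π⁻¹(S)` in the development of the subgraph with edge set `S`. -/
def lift [DecidableEq E] (S : Finset E) : Finset (E × ZMod 3) :=
  S ×ˢ (Finset.univ : Finset (ZMod 3))

/-- The map `α_z : i_w ↦ i_{w+z}` on the vertices of the development. -/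
def devShift (z : ZMod 3) : V × ZMod 3 → V × ZMod 3 :=
  fun p => (p.1, p.2 + z)

/-- The map `α_z` on the edges of the development. -/
def devShiftE (z : ZMod 3) : E × ZMod 3 → E × ZMod 3 :=
  fun s => (s.1, s.2 + z)

/-- Two vertices of a multigraph are adjacent if some edge joins them (in either
direction). -/
def Adj (G : Multigraph V E) (u v : V) : Prop :=
  ∃ e, (G.tail e = u ∧ G.head e = v) ∨ (G.tail e = v ∧ G.head e = u)

section Aux

variable {V E Γ : Type}

lemma walkFrom_append {G : Multigraph V E} {u v x : V} {w1 w2 : List (E × Bool)}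
    (h1 : G.WalkFrom u v w1) (h2 : G.WalkFrom v x w2) : G.WalkFrom u x (w1 ++ w2) := by
  induction h1 with
  | nil v => simpa using h2
  | cons s _ ih => exact WalkFrom.cons s (ih h2)

lemma walkFrom_cons {G : Multigraph V E} {u x : V} {s : E × Bool} {rest : List (E × Bool)}
    (h : G.WalkFrom u x (s :: rest)) :
    u = G.stepSrc s ∧ G.WalkFrom (G.stepDst s) x rest := by
  cases h with
  | cons _ h => exact ⟨rfl, h⟩

lemma walkFrom_split {G : Multigraph V E} :
    ∀ (w1 : List (E × Bool)) {w2 : List (E × Bool)} {u x : V},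
      G.WalkFrom u x (w1 ++ w2) → ∃ v, G.WalkFrom u v w1 ∧ G.WalkFrom v x w2
  | [], _, u, _, h => ⟨u, WalkFrom.nil u, h⟩
  | s :: w1, w2, u, x, h => by
      obtain ⟨rfl, h'⟩ := walkFrom_cons h
      obtain ⟨v, hv1, hv2⟩ := walkFrom_split w1 h'
      exact ⟨v, WalkFrom.cons s hv1, hv2⟩

lemma rho_append [AddCommGroup Γ] (γ : E → Γ) (w1 w2 : List (E × Bool)) :
    rho γ (w1 ++ w2) = rho γ w1 + rho γ w2 := by
  simp [rho]

lemma rho_cons [AddCommGroup Γ] (γ : E → Γ) (s : E × Bool) (w : List (E × Bool)) :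
    rho γ (s :: w) = (if s.2 then γ s.1 else -γ s.1) + rho γ w := by
  simp [rho]

lemma exists_split_of_not_nodup_map {α β : Type*} (f : α → β) :
    ∀ (l : List α), ¬ (l.map f).Nodup →
      ∃ l1 s l2 t l3, l = l1 ++ s :: (l2 ++ t :: l3) ∧ f s = f t := by
  intro l
  induction l with
  | nil => simp
  | cons x l ih =>
    intro h
    rw [List.map_cons, List.nodup_cons] at h
    by_cases hx : f x ∈ l.map f
    · obtain ⟨t, ht, hft⟩ := List.mem_map.mp hx
      obtain ⟨l2, l3, rfl⟩ := List.append_of_mem ht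
      exact ⟨[], x, l2, t, l3, rfl, hft.symm⟩
    · have h' : ¬ (l.map f).Nodup := fun hnd => h ⟨hx, hnd⟩
      obtain ⟨l1, s, l2, t, l3, rfl, hst⟩ := ih h'
      exact ⟨x :: l1, s, l2, t, l3, rfl, hst⟩

lemma rho_closed_eq_zero [AddCommGroup Γ] {G : Multigraph V E} {γ : E → Γ} {S : Finset E}
    [DecidableEq V] [DecidableEq E]
    (hT : G.TrivialImage γ S) :
    ∀ (n : ℕ) (w : List (E × Bool)) (v : V), w.length ≤ n → G.WalkFrom v v w →
      (∀ s ∈ w, s.1 ∈ S) → rho γ w = 0 := by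
  intro n
  induction n with
  | zero =>
    intro w v hl _ _
    rw [List.length_eq_zero_iff.mp (Nat.le_zero.mp hl)]
    simp [rho]
  | succ n ih =>
    intro w v hl hw hmem
    by_cases hsrc : (w.map G.stepSrc).Nodup
    · by_cases hedge : (w.map Prod.fst).Nodup
      · rcases eq_or_ne w [] with rfl | hne
        · simp [rho]
        · exact hT w ⟨⟨v, hw⟩, hne, hmem, hedge, hsrc⟩
      · obtain ⟨w1, s, w2, t, w3, rfl, hst⟩ := exists_split_of_not_nodup_map Prod.fst w hedge
        obtain ⟨m1, h1, h2⟩ := walkFrom_split w1 hw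
        obtain ⟨hm1, h3⟩ := walkFrom_cons h2
        subst hm1
        obtain ⟨m2, h4, h5⟩ := walkFrom_split w2 h3
        obtain ⟨hm2, h6⟩ := walkFrom_cons h5
        subst hm2
        -- srcs nodup gives stepSrc s ≠ stepSrc t
        simp only [List.map_append, List.map_cons] at hsrc
        have h7 := (List.nodup_cons.mp hsrc.of_append_right).1
        have h8 : G.stepSrc t ∈ w2.map G.stepSrc ++ G.stepSrc t :: w3.map G.stepSrc :=
          List.mem_append_right _ List.mem_cons_self
        have hne : G.stepSrc s ≠ G.stepSrc t := fun he => h7 (he ▸ h8)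
        have key : G.stepDst s = G.stepSrc t ∧ G.stepDst t = G.stepSrc s ∧
            (if s.2 then γ s.1 else -γ s.1) + (if t.2 then γ t.1 else -γ t.1) = 0 := by
          obtain ⟨e1, b1⟩ := s
          obtain ⟨e2, b2⟩ := t
          simp only at hst
          subst hst
          cases b1 <;> cases b2 <;>
            simp_all [Multigraph.stepSrc, Multigraph.stepDst]
        have hlen : (w1 ++ s :: (w2 ++ t :: w3)).length = w1.length + w2.length + w3.length + 2 := by
          simp; omega
        have hz2 : rho γ w2 = 0 := by
          refine ih w2 (G.stepDst s) (by rw [hlen] at hl; omega) ?_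
            (fun s' hs' => hmem s' (by simp [hs']))
          have h4' : G.WalkFrom (G.stepDst s) (G.stepDst s) w2 := by
            nth_rewrite 2 [key.1]; exact h4
          exact h4'
        have hz13 : rho γ (w1 ++ w3) = 0 := by
          refine ih (w1 ++ w3) v (by rw [hlen] at hl; simp; omega) ?_
            (fun s' hs' => hmem s' (by simp at hs'; rcases hs' with h | h <;> simp [h]))
          refine walkFrom_append h1 ?_
          have h6' : G.WalkFrom (G.stepSrc s) v w3 := by
            rw [← key.2.1]; exact h6
          exact h6'
        rw [rho_append] at hz13
        rw [rho_append, rho_cons, rho_append, rho_cons]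
        have expand : rho γ w1 + ((if s.2 then γ s.1 else -γ s.1) +
            (rho γ w2 + ((if t.2 then γ t.1 else -γ t.1) + rho γ w3))) =
            (rho γ w1 + rho γ w3) + rho γ w2 +
              ((if s.2 then γ s.1 else -γ s.1) + (if t.2 then γ t.1 else -γ t.1)) := by
          abel
        rw [expand, hz13, hz2, key.2.2]
        simp
    · obtain ⟨w1, s, w2, t, w3, rfl, hst⟩ := exists_split_of_not_nodup_map G.stepSrc w hsrc
      obtain ⟨m1, h1, h2⟩ := walkFrom_split w1 hw
      obtain ⟨hm1, h3⟩ := walkFrom_cons h2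
      subst hm1
      obtain ⟨m2, h4, h5⟩ := walkFrom_split w2 h3
      obtain ⟨hm2, h6⟩ := walkFrom_cons h5
      subst hm2
      have hlen : (w1 ++ s :: (w2 ++ t :: w3)).length = w1.length + w2.length + w3.length + 2 := by
        simp; omega
      have hz1 : rho γ (s :: w2) = 0 := by
        refine ih (s :: w2) (G.stepSrc s) (by rw [hlen] at hl; simp; omega) ?_
          (fun s' hs' => hmem s' (by simp at hs'; rcases hs' with h | h <;> simp [h]))
        refine WalkFrom.cons s ?_
        have h4' : G.WalkFrom (G.stepDst s) (G.stepSrc s) w2 := by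
          rw [hst]; exact h4
        exact h4'
      have hz2 : rho γ (w1 ++ t :: w3) = 0 := by
        refine ih (w1 ++ t :: w3) v (by rw [hlen] at hl; simp; omega) ?_
          (fun s' hs' => hmem s' (by simp at hs'; rcases hs' with h | h | h <;> simp [h]))
        refine walkFrom_append h1 ?_
        have hcons : G.WalkFrom (G.stepSrc t) v (t :: w3) := WalkFrom.cons t h6
        rw [hst]; exact hcons
      rw [rho_cons] at hz1
      rw [rho_append, rho_cons] at hz2
      rw [rho_append, rho_cons, rho_append, rho_cons]
      have expand : rho γ w1 + ((if s.2 then γ s.1 else -γ s.1) +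
          (rho γ w2 + ((if t.2 then γ t.1 else -γ t.1) + rho γ w3))) =
          ((if s.2 then γ s.1 else -γ s.1) + rho γ w2) +
            (rho γ w1 + ((if t.2 then γ t.1 else -γ t.1) + rho γ w3)) := by
        abel
      rw [expand, hz1, hz2]
      simp

lemma walk_stay {G : Multigraph V E} {OE : Finset E} [DecidableEq V] {W : Finset V}
    (hstep : ∀ s : E × Bool, s.1 ∈ OE → G.stepSrc s ∈ W → G.stepDst s ∈ W) :
    ∀ {a b : V} {w : List (E × Bool)}, G.WalkFrom a b w → (∀ s ∈ w, s.1 ∈ OE) → a ∈ W → b ∈ W := by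
  intro a b w h
  induction h with
  | nil v => exact fun _ h => h
  | cons s h ih =>
    intro hmem ha
    exact ih (fun s' hs' => hmem s' (List.mem_cons_of_mem _ hs'))
      (hstep s (hmem s List.mem_cons_self) ha)

lemma walk_const {G : Multigraph V E} :
    ∀ {a b : V} {w : List (E × Bool)}, G.WalkFrom a b w →
      (∀ s ∈ w, G.stepSrc s = G.stepDst s) → a = b := by
  intro a b w h
  induction h with
  | nil v => intro _; rfl
  | cons s h ih =>
    intro hmem
    rw [hmem s List.mem_cons_self]
    exact ih (fun s' hs' => hmem s' (List.mem_cons_of_mem _ hs'))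

lemma verts_union (G : Multigraph V E) [DecidableEq V] [DecidableEq E] (A B : Finset E) :
    G.verts (A ∪ B) = G.verts A ∪ G.verts B := by
  simp only [Multigraph.verts, Finset.image_union]
  exact Finset.union_union_union_comm _ _ _ _

lemma verts_mono (G : Multigraph V E) [DecidableEq V] {A B : Finset E} (h : A ⊆ B) :
    G.verts A ⊆ G.verts B :=
  Finset.union_subset_union (Finset.image_subset_image h) (Finset.image_subset_image h)

lemma tail_mem_verts (G : Multigraph V E) [DecidableEq V] {S : Finset E} {e : E} (h : e ∈ S) :
    G.tail e ∈ G.verts S :=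
  Finset.mem_union_left _ (Finset.mem_image_of_mem _ h)

lemma head_mem_verts (G : Multigraph V E) [DecidableEq V] {S : Finset E} {e : E} (h : e ∈ S) :
    G.head e ∈ G.verts S :=
  Finset.mem_union_right _ (Finset.mem_image_of_mem _ h)

lemma stepSrc_mem_verts (G : Multigraph V E) [DecidableEq V] {S : Finset E} {s : E × Bool}
    (h : s.1 ∈ S) : G.stepSrc s ∈ G.verts S := by
  rcases s with ⟨e, b⟩
  cases b
  · exact head_mem_verts G h
  · exact tail_mem_verts G h

lemma stepDst_mem_verts (G : Multigraph V E) [DecidableEq V] {S : Finset E} {s : E × Bool}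
    (h : s.1 ∈ S) : G.stepDst s ∈ G.verts S := by
  rcases s with ⟨e, b⟩
  cases b
  · exact tail_mem_verts G h
  · exact head_mem_verts G h

lemma verts_submod (G : Multigraph V E) [DecidableEq V] [DecidableEq E] (A B : Finset E) :
    ((G.verts (A ∪ B)).card : ℤ) + ((G.verts (A ∩ B)).card : ℤ) ≤
      (G.verts A).card + (G.verts B).card := by
  have h1 := Finset.card_union_add_card_inter (G.verts A) (G.verts B)
  have h2 : G.verts (A ∩ B) ⊆ G.verts A ∩ G.verts B :=
    Finset.subset_inter (verts_mono _ Finset.inter_subset_left)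
      (verts_mono _ Finset.inter_subset_right)
  have h3 := Finset.card_le_card h2
  rw [verts_union]
  omega

lemma zmod3_cases (d : ZMod 3) : d = 0 ∨ d = 1 ∨ d = 2 := by revert d; decide

lemma devShiftE_inj (z : ZMod 3) :
    Function.Injective (devShiftE z : E × ZMod 3 → E × ZMod 3) := by
  rintro ⟨e, w⟩ ⟨e', w'⟩ h
  simp only [devShiftE, Prod.mk.injEq] at h
  exact Prod.ext h.1 (by have := h.2; exact add_right_cancel this)

lemma devShift_inj (z : ZMod 3) :
    Function.Injective (devShift z : V × ZMod 3 → V × ZMod 3) := by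
  rintro ⟨v, w⟩ ⟨v', w'⟩ h
  simp only [devShift, Prod.mk.injEq] at h
  exact Prod.ext h.1 (by have := h.2; exact add_right_cancel this)

lemma image_shiftE_image (a b : ZMod 3) (S : Finset (E × ZMod 3)) [DecidableEq E] :
    (S.image (devShiftE a)).image (devShiftE b) = S.image (devShiftE (a + b)) := by
  rw [Finset.image_image]
  congr 1
  funext s
  simp [devShiftE, add_assoc]

lemma image_shiftE_zero (S : Finset (E × ZMod 3)) [DecidableEq E] :
    S.image (devShiftE 0) = S := by
  have h : (devShiftE 0 : E × ZMod 3 → E × ZMod 3) = id := by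
    funext s; simp [devShiftE]
  rw [h, Finset.image_id]

lemma verts_shiftE (G : Multigraph V E) (γ : E → ZMod 3) [DecidableEq V] [DecidableEq E]
    (z : ZMod 3) (S : Finset (E × ZMod 3)) :
    (G.Development γ).verts (S.image (devShiftE z)) =
      ((G.Development γ).verts S).image (devShift z) := by
  simp only [Multigraph.verts, Finset.image_union, Finset.image_image]
  congr 1 <;>
    · congr 1
      funext s
      rcases s with ⟨e, w⟩
      simp only [Multigraph.Development, devShiftE, devShift, Function.comp, Prod.mk.injEq]
      constructor <;> first | trivial | ring

lemma card_shiftE (z : ZMod 3) (S : Finset (E × ZMod 3)) [DecidableEq E] :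
    (S.image (devShiftE z)).card = S.card :=
  Finset.card_image_of_injective _ (devShiftE_inj z)

lemma card_verts_shiftE (G : Multigraph V E) (γ : E → ZMod 3) [DecidableEq V] [DecidableEq E]
    (z : ZMod 3) (S : Finset (E × ZMod 3)) :
    ((G.Development γ).verts (S.image (devShiftE z))).card =
      ((G.Development γ).verts S).card := by
  rw [verts_shiftE]
  exact Finset.card_image_of_injective _ (devShift_inj z)

lemma proj_walk (G : Multigraph V E) (γ : E → ZMod 3) {a b : V × ZMod 3}
    {w : List ((E × ZMod 3) × Bool)}
    (h : (G.Development γ).WalkFrom a b w) :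
    G.WalkFrom a.1 b.1 (w.map (fun s => (s.1.1, s.2))) ∧
      rho γ (w.map (fun s => (s.1.1, s.2))) = b.2 - a.2 := by
  induction h with
  | nil v => exact ⟨WalkFrom.nil v.1, by simp [rho]⟩
  | cons s h ih =>
    have hsrc1 : ((G.Development γ).stepSrc s).1 = G.stepSrc (s.1.1, s.2) := by
      rcases s with ⟨⟨e, z⟩, b⟩; cases b <;> rfl
    have hdst1 : ((G.Development γ).stepDst s).1 = G.stepDst (s.1.1, s.2) := by
      rcases s with ⟨⟨e, z⟩, b⟩; cases b <;> rfl
    have hterm : (if s.2 then γ s.1.1 else -γ s.1.1)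
        = ((G.Development γ).stepDst s).2 - ((G.Development γ).stepSrc s).2 := by
      rcases s with ⟨⟨e, z⟩, b⟩
      cases b <;>
        simp [Multigraph.stepSrc, Multigraph.stepDst, Multigraph.Development] <;> ring
    constructor
    · rw [List.map_cons, hsrc1]
      refine WalkFrom.cons (s.1.1, s.2) ?_
      rw [← hdst1]
      exact ih.1
    · rw [List.map_cons, rho_cons, ih.2, hterm]
      ring

lemma mem_O_iff {C O : Finset (E × ZMod 3)} [DecidableEq E]
    (hO : O = C ∪ C.image (devShiftE 1) ∪ C.image (devShiftE 2)) (e : E) (z : ZMod 3) :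
    (e, z) ∈ O ↔ ∃ w, (e, w) ∈ C := by
  subst hO
  simp only [Finset.mem_union, Finset.mem_image]
  constructor
  · rintro ((h | ⟨⟨e', w⟩, hw, heq⟩) | ⟨⟨e', w⟩, hw, heq⟩)
    · exact ⟨z, h⟩
    · simp only [devShiftE, Prod.mk.injEq] at heq
      exact ⟨w, heq.1 ▸ hw⟩
    · simp only [devShiftE, Prod.mk.injEq] at heq
      exact ⟨w, heq.1 ▸ hw⟩
  · rintro ⟨w, hw⟩
    rcases zmod3_cases (z - w) with h | h | h
    · left; left
      have hzw : z = w := by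
        have := sub_eq_zero.mp h
        exact this
      rw [hzw]; exact hw
    · left; right
      refine ⟨(e, w), hw, ?_⟩
      have hz : z = 1 + w := sub_eq_iff_eq_add.mp h
      exact Prod.ext rfl (by rw [hz]; exact add_comm w 1)
    · right
      refine ⟨(e, w), hw, ?_⟩
      have hz : z = 2 + w := sub_eq_iff_eq_add.mp h
      exact Prod.ext rfl (by rw [hz]; exact add_comm w 2)

lemma O_eq_prod {C O : Finset (E × ZMod 3)} [DecidableEq E]
    (hO : O = C ∪ C.image (devShiftE 1) ∪ C.image (devShiftE 2)) :
    O = (O.image Prod.fst) ×ˢ (Finset.univ : Finset (ZMod 3)) := by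
  ext ⟨e, z⟩
  simp only [Finset.mem_product, Finset.mem_univ, and_true, Finset.mem_image]
  constructor
  · intro h
    exact ⟨(e, z), h, rfl⟩
  · rintro ⟨⟨e', z'⟩, h, rfl⟩
    rw [mem_O_iff hO] at h ⊢
    exact h

lemma O_card {C O : Finset (E × ZMod 3)} [DecidableEq E]
    (hO : O = C ∪ C.image (devShiftE 1) ∪ C.image (devShiftE 2)) :
    O.card = 3 * (O.image Prod.fst).card := by
  conv_lhs => rw [O_eq_prod hO]
  rw [Finset.card_product, Finset.card_univ]
  have h3 : Fintype.card (ZMod 3) = 3 := by decide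
  rw [h3, Nat.mul_comm]

lemma mem_verts_O (G : Multigraph V E) (γ : E → ZMod 3) [DecidableEq V] [DecidableEq E]
    {C O : Finset (E × ZMod 3)}
    (hO : O = C ∪ C.image (devShiftE 1) ∪ C.image (devShiftE 2)) (v : V) (z : ZMod 3) :
    (v, z) ∈ (G.Development γ).verts O ↔ v ∈ G.verts (O.image Prod.fst) := by
  simp only [Multigraph.verts, Finset.mem_union, Finset.mem_image]
  constructor
  · rintro (⟨⟨e, w⟩, hm, heq⟩ | ⟨⟨e, w⟩, hm, heq⟩)
    · left
      have : G.tail e = v := congrArg Prod.fst heq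
      exact ⟨e, ⟨(e, w), hm, rfl⟩, this⟩
    · right
      have : G.head e = v := congrArg Prod.fst heq
      exact ⟨e, ⟨(e, w), hm, rfl⟩, this⟩
  · rintro (⟨e, ⟨⟨e', w'⟩, hm, rfl⟩, hv⟩ | ⟨e, ⟨⟨e', w'⟩, hm, rfl⟩, hv⟩)
    · left
      refine ⟨(e', z), (mem_O_iff hO e' z).mpr ((mem_O_iff hO e' w').mp hm), ?_⟩
      show (G.tail e', z) = (v, z)
      rw [hv]
    · right
      refine ⟨(e', z - γ e'), (mem_O_iff hO e' _).mpr ((mem_O_iff hO e' w').mp hm), ?_⟩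
      show (G.head e', z - γ e' + γ e') = (v, z)
      rw [sub_add_cancel, hv]

lemma verts_O_card (G : Multigraph V E) (γ : E → ZMod 3) [DecidableEq V] [DecidableEq E]
    {C O : Finset (E × ZMod 3)}
    (hO : O = C ∪ C.image (devShiftE 1) ∪ C.image (devShiftE 2)) :
    ((G.Development γ).verts O).card = 3 * (G.verts (O.image Prod.fst)).card := by
  have hset : (G.Development γ).verts O =
      (G.verts (O.image Prod.fst)) ×ˢ (Finset.univ : Finset (ZMod 3)) := by
    ext ⟨v, z⟩
    simp only [Finset.mem_product, Finset.mem_univ, and_true]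
    exact mem_verts_O G γ hO v z
  rw [hset, Finset.card_product, Finset.card_univ]
  have h3 : Fintype.card (ZMod 3) = 3 := by decide
  rw [h3, Nat.mul_comm]

end Aux

end Multigraph

open Multigraph in
/-- if a Laman circuit in the development has a connected orbit `O` under the
`ℤ/3ℤ`-action, then `O` has at least `2|V(O)|` edges; consequently `π(O)` has non-trivial
image and violates `m' ≤ 2n' - 1`. -/
theorem connected_orbit_of_laman_circuit
    {V E : Type} [Fintype V] [Fintype E] [DecidableEq V] [DecidableEq E]
    (G : Multigraph V E) (γ : E → ZMod 3) (C : Finset (E × ZMod 3))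
    (hC : (G.Development γ).Circuit 2 3 C)
    (O : Finset (E × ZMod 3))
    (hO : O = C ∪ C.image (devShiftE 1) ∪ C.image (devShiftE 2))
    (hOconn : ∀ u ∈ (G.Development γ).verts O, ∀ v ∈ (G.Development γ).verts O,
      ∃ w, (G.Development γ).IsPathIn O u v w) :
    2 * (((G.Development γ).verts O).card : ℤ) ≤ (O.card : ℤ) ∧
    ¬ G.TrivialImage γ (O.image Prod.fst) ∧
    ¬ (((O.image Prod.fst).card : ℤ) ≤ 2 * ((G.verts (O.image Prod.fst)).card : ℤ) - 1) := by
  classical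
  -- C is nonempty
  have hCne : C.Nonempty := by
    by_contra h
    rw [Finset.not_nonempty_iff_eq_empty] at h
    apply hC.1
    intro S' hS' hne
    rw [h, Finset.subset_empty] at hS'
    rw [hS'] at hne
    exact absurd hne (by simp)
  -- proper nonempty subsets of C satisfy the Laman count
  have hsp : ∀ S ⊆ C, S.Nonempty → S ≠ C →
      (S.card : ℤ) ≤ 2 * (((G.Development γ).verts S).card : ℤ) - 3 := by
    intro S hsub hne hneq
    obtain ⟨e, heC, heS⟩ := Finset.exists_of_ssubset (ssubset_of_subset_of_ne hsub hneq)
    exact hC.2 e heC S (Finset.subset_erase.mpr ⟨hsub, heS⟩) hne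
  -- lower bound for |C|
  have hClb : 2 * (((G.Development γ).verts C).card : ℤ) - 2 ≤ (C.card : ℤ) := by
    have hns := hC.1
    simp only [Multigraph.Sparse] at hns
    push_neg at hns
    obtain ⟨S₀, hsub, hne, hgt⟩ := hns
    rcases eq_or_ne S₀ C with rfl | hne2
    · omega
    · exact absurd (hsp S₀ hsub hne hne2) (by omega)
  -- main counting inequality
  have hmain : 2 * (((G.Development γ).verts O).card : ℤ) - 2 ≤ (O.card : ℤ) := by
    rcases Nat.lt_or_ge C.card 2 with hcard | hcard
    · -- |C| = 1 : C is a single loop, contradicting connectivity of O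
      exfalso
      have h1 : C.card = 1 := by
        have := Finset.card_pos.mpr hCne
        omega
      obtain ⟨s₀, hs₀⟩ := Finset.card_eq_one.mp h1
      subst hs₀
      have hns := hC.1
      simp only [Multigraph.Sparse] at hns
      push_neg at hns
      obtain ⟨S₀, hsub, hne, hgt⟩ := hns
      have hS₀ : S₀ = {s₀} := by
        rcases Finset.subset_singleton_iff.mp hsub with rfl | h
        · exact absurd hne (by simp)
        · exact h
      rw [hS₀] at hgt
      have hvle : ((G.Development γ).verts {s₀}).card ≤ 1 := by
        have hc1 : (({s₀} : Finset (E × ZMod 3)).card : ℤ) = 1 := by simp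
        omega
      have htl : (G.Development γ).tail s₀ ∈ (G.Development γ).verts {s₀} :=
        tail_mem_verts _ (Finset.mem_singleton_self s₀)
      have hhd : (G.Development γ).head s₀ ∈ (G.Development γ).verts {s₀} :=
        head_mem_verts _ (Finset.mem_singleton_self s₀)
      have heq : (G.Development γ).tail s₀ = (G.Development γ).head s₀ :=
        Finset.card_le_one.mp hvle _ htl _ hhd
      obtain ⟨e, z⟩ := s₀
      have htl' : G.tail e = G.head e := congrArg Prod.fst heq
      have hγ : γ e = 0 := by
        have h2 : z = z + γ e := congrArg Prod.snd heq
        exact (left_eq_add.mp h2)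
      have heO : (e, z) ∈ O := (mem_O_iff hO e z).mpr ⟨z, Finset.mem_singleton_self _⟩
      have heπ : e ∈ O.image Prod.fst := Finset.mem_image_of_mem Prod.fst heO
      have hm1 : ((G.tail e, z) : V × ZMod 3) ∈ (G.Development γ).verts O :=
        (mem_verts_O G γ hO _ _).mpr (tail_mem_verts G heπ)
      have hm2 : ((G.tail e, z + 1) : V × ZMod 3) ∈ (G.Development γ).verts O :=
        (mem_verts_O G γ hO _ _).mpr (tail_mem_verts G heπ)
      obtain ⟨w, hwWalk, hwmem, _⟩ := hOconn _ hm1 _ hm2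
      have hconst : ∀ s ∈ w, (G.Development γ).stepSrc s = (G.Development γ).stepDst s := by
        intro s hs
        have hsO : s.1 ∈ O := hwmem s hs
        rcases s with ⟨⟨e', z'⟩, b⟩
        obtain ⟨w', hw'⟩ := (mem_O_iff hO e' z').mp hsO
        have he' : e' = e := by
          have := Finset.mem_singleton.mp hw'
          exact congrArg Prod.fst this
        subst he'
        cases b <;>
          simp [Multigraph.stepSrc, Multigraph.stepDst, Multigraph.Development, htl', hγ]
      have hends := walk_const hwWalk hconst
      have hz : z = z + 1 := congrArg Prod.snd hends
      have h01 : (1 : ZMod 3) = 0 := (left_eq_add.mp hz)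
      exact absurd h01 (by decide)
    · -- |C| ≥ 2 : C satisfies the circuit count |C| = 2n(C) - 2
      have hCub : (C.card : ℤ) ≤ 2 * (((G.Development γ).verts C).card : ℤ) - 2 := by
        obtain ⟨e, he⟩ := hCne
        have hne : (C.erase e).Nonempty := by
          rw [← Finset.card_pos, Finset.card_erase_of_mem he]
          omega
        have h1 := hC.2 e he (C.erase e) (subset_refl _) hne
        have h2 : (C.erase e).card = C.card - 1 := Finset.card_erase_of_mem he
        have h5 : ((G.Development γ).verts (C.erase e)).card ≤ ((G.Development γ).verts C).card :=
          Finset.card_le_card (verts_mono _ (Finset.erase_subset _ _))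
        omega
      have hfC : (C.card : ℤ) = 2 * (((G.Development γ).verts C).card : ℤ) - 2 :=
        le_antisymm hCub hClb
      -- shift bookkeeping
      have hadd11 : (1 + 1 : ZMod 3) = 2 := by decide
      have hadd21 : (2 + 1 : ZMod 3) = 0 := by decide
      have hadd12 : (1 + 2 : ZMod 3) = 0 := by decide
      have hs12 : (C.image (devShiftE 1)).image (devShiftE 1) = C.image (devShiftE 2) := by
        rw [image_shiftE_image, hadd11]
      have hs20 : (C.image (devShiftE 2)).image (devShiftE 1) = C := by
        rw [image_shiftE_image, hadd21, image_shiftE_zero]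
      have hs10 : (C.image (devShiftE 1)).image (devShiftE 2) = C := by
        rw [image_shiftE_image, hadd12, image_shiftE_zero]
      have hc1 : (C.image (devShiftE 1)).card = C.card := card_shiftE 1 C
      have hc2 : (C.image (devShiftE 2)).card = C.card := card_shiftE 2 C
      have hv1 : ((G.Development γ).verts (C.image (devShiftE 1))).card =
          ((G.Development γ).verts C).card := card_verts_shiftE G γ 1 C
      have hv2 : ((G.Development γ).verts (C.image (devShiftE 2))).card =
          ((G.Development γ).verts C).card := card_verts_shiftE G γ 2 C
      by_cases hCC1 : C = C.image (devShiftE 1)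
      · -- C is shift-invariant, so O = C
        have hC2C : C.image (devShiftE 2) = C := by
          rw [← hs12, ← hCC1, ← hCC1]
        have hOC : O = C := by
          rw [hO, ← hCC1, hC2C]
          simp
        rw [hOC]
        omega
      · by_cases hI : (C ∩ C.image (devShiftE 1)).Nonempty
        · -- case (a): adjacent copies share an edge
          have hIne : C ∩ C.image (devShiftE 1) ≠ C := by
            intro h
            have hsubset : C ⊆ C.image (devShiftE 1) := by
              conv_lhs => rw [← h]
              exact Finset.inter_subset_right
            exact hCC1 (Finset.eq_of_subset_of_card_le hsubset (by rw [hc1]))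
          have hfI := hsp (C ∩ C.image (devShiftE 1)) Finset.inter_subset_left hI hIne
          have hIpos : 1 ≤ (C ∩ C.image (devShiftE 1)).card := Finset.card_pos.mpr hI
          have hsub1 := verts_submod (G.Development γ) C (C.image (devShiftE 1))
          have hcu1 := Finset.card_union_add_card_inter C (C.image (devShiftE 1))
          have him : (C ∩ C.image (devShiftE 1)).image (devShiftE 1) =
              C.image (devShiftE 1) ∩ C.image (devShiftE 2) := by
            rw [Finset.image_inter _ _ (devShiftE_inj 1), hs12]
          have hJne : ((C ∪ C.image (devShiftE 1)) ∩ C.image (devShiftE 2)).Nonempty := by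
            have h12ne : (C.image (devShiftE 1) ∩ C.image (devShiftE 2)).Nonempty := by
              rw [← him]; exact hI.image _
            exact h12ne.mono
              (Finset.inter_subset_inter Finset.subset_union_right (subset_refl _))
          have hsub2 := verts_submod (G.Development γ) (C ∪ C.image (devShiftE 1))
            (C.image (devShiftE 2))
          have hcu2 := Finset.card_union_add_card_inter (C ∪ C.image (devShiftE 1))
            (C.image (devShiftE 2))
          rw [hO]
          by_cases hJC : (C ∪ C.image (devShiftE 1)) ∩ C.image (devShiftE 2) =
              C.image (devShiftE 2)
          · rw [hJC] at hsub2 hcu2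
            omega
          · have hJsub : ((C ∪ C.image (devShiftE 1)) ∩ C.image (devShiftE 2)).image
                (devShiftE 1) ⊆ C := by
              calc ((C ∪ C.image (devShiftE 1)) ∩ C.image (devShiftE 2)).image (devShiftE 1)
                  ⊆ (C.image (devShiftE 2)).image (devShiftE 1) :=
                    Finset.image_subset_image Finset.inter_subset_right
                _ = C := hs20
            have hJ'ne : (((C ∪ C.image (devShiftE 1)) ∩ C.image (devShiftE 2)).image
                (devShiftE 1)).Nonempty := hJne.image (devShiftE 1)
            have hJ'neq : ((C ∪ C.image (devShiftE 1)) ∩ C.image (devShiftE 2)).image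
                (devShiftE 1) ≠ C := by
              intro h
              apply hJC
              have h' := congrArg (fun S => Finset.image (devShiftE 2) S) h
              rw [image_shiftE_image, hadd12, image_shiftE_zero] at h'
              rw [h']
            have hfJ' := hsp _ hJsub hJ'ne hJ'neq
            have hcJ : (((C ∪ C.image (devShiftE 1)) ∩ C.image (devShiftE 2)).image
                (devShiftE 1)).card =
                ((C ∪ C.image (devShiftE 1)) ∩ C.image (devShiftE 2)).card :=
              card_shiftE 1 _
            have hvJ : ((G.Development γ).verts (((C ∪ C.image (devShiftE 1)) ∩
                C.image (devShiftE 2)).image (devShiftE 1))).card =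
                ((G.Development γ).verts ((C ∪ C.image (devShiftE 1)) ∩
                  C.image (devShiftE 2))).card :=
              card_verts_shiftE G γ 1 _
            omega
        · -- case (b): the three copies are edge-disjoint; use connectivity
          have hIempty : C ∩ C.image (devShiftE 1) = ∅ :=
            Finset.not_nonempty_iff_eq_empty.mp hI
          have h12 : C.image (devShiftE 1) ∩ C.image (devShiftE 2) = ∅ := by
            have h' := congrArg (fun S => Finset.image (devShiftE 1) S) hIempty
            simp only [Finset.image_empty] at h'
            rwa [Finset.image_inter _ _ (devShiftE_inj 1), hs12] at h'
          have h02 : C ∩ C.image (devShiftE 2) = ∅ := by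
            have h' := congrArg (fun S => Finset.image (devShiftE 2) S) hIempty
            simp only [Finset.image_empty] at h'
            rw [Finset.image_inter _ _ (devShiftE_inj 2), hs10] at h'
            rwa [Finset.inter_comm] at h'
          have hd1 : Disjoint C (C.image (devShiftE 1)) :=
            Finset.disjoint_iff_inter_eq_empty.mpr hIempty
          have hd2 : Disjoint (C ∪ C.image (devShiftE 1)) (C.image (devShiftE 2)) := by
            rw [Finset.disjoint_union_left]
            exact ⟨Finset.disjoint_iff_inter_eq_empty.mpr h02,
              Finset.disjoint_iff_inter_eq_empty.mpr h12⟩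
          have hOcard3 : O.card = C.card + (C.image (devShiftE 1)).card +
              (C.image (devShiftE 2)).card := by
            rw [hO, Finset.card_union_of_disjoint hd2, Finset.card_union_of_disjoint hd1]
          have hvO : (G.Development γ).verts O = (G.Development γ).verts C ∪
              (G.Development γ).verts (C.image (devShiftE 1)) ∪
              (G.Development γ).verts (C.image (devShiftE 2)) := by
            rw [hO, verts_union, verts_union]
          -- vertex images under the shift
          have hm01 : ((G.Development γ).verts C).image (devShift 1) =
              (G.Development γ).verts (C.image (devShiftE 1)) := (verts_shiftE G γ 1 C).symm
          have hm12 : ((G.Development γ).verts (C.image (devShiftE 1))).image (devShift 1) =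
              (G.Development γ).verts (C.image (devShiftE 2)) := by
            rw [← verts_shiftE G γ 1 (C.image (devShiftE 1)), hs12]
          have hm20 : ((G.Development γ).verts (C.image (devShiftE 2))).image (devShift 1) =
              (G.Development γ).verts C := by
            rw [← verts_shiftE G γ 1 (C.image (devShiftE 2)), hs20]
          -- connectivity yields a common vertex of V0 and V1
          have hkey : ∃ y, y ∈ (G.Development γ).verts C ∩
              (G.Development γ).verts (C.image (devShiftE 1)) := by
            by_contra hno
            push_neg at hno
            have hno' : ∀ y, y ∉ (G.Development γ).verts C ∩
                (G.Development γ).verts (C.image (devShiftE 2)) := by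
              intro y hy
              rw [Finset.mem_inter] at hy
              apply hno (devShift 1 y)
              rw [Finset.mem_inter]
              constructor
              · rw [← hm20]; exact Finset.mem_image_of_mem _ hy.2
              · rw [← hm01]; exact Finset.mem_image_of_mem _ hy.1
            obtain ⟨s₀, hs₀⟩ := hCne
            have hu : (G.Development γ).tail s₀ ∈ (G.Development γ).verts C :=
              tail_mem_verts _ hs₀
            have hx : devShift 1 ((G.Development γ).tail s₀) ∈
                (G.Development γ).verts (C.image (devShiftE 1)) := by
              rw [← hm01]; exact Finset.mem_image_of_mem _ hu
            have huO : (G.Development γ).tail s₀ ∈ (G.Development γ).verts O := by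
              rw [hvO]
              exact Finset.mem_union_left _ (Finset.mem_union_left _ hu)
            have hxO : devShift 1 ((G.Development γ).tail s₀) ∈ (G.Development γ).verts O := by
              rw [hvO]
              exact Finset.mem_union_left _ (Finset.mem_union_right _ hx)
            obtain ⟨w, hwWalk, hwmem, _⟩ := hOconn _ huO _ hxO
            have hstep : ∀ s : (E × ZMod 3) × Bool, s.1 ∈ O →
                (G.Development γ).stepSrc s ∈ (G.Development γ).verts C →
                (G.Development γ).stepDst s ∈ (G.Development γ).verts C := by
              intro s hsO hsrc
              rw [hO] at hsO
              rcases Finset.mem_union.mp hsO with hs | hs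
              · rcases Finset.mem_union.mp hs with hs' | hs'
                · exact stepDst_mem_verts _ hs'
                · exact absurd (Finset.mem_inter.mpr ⟨hsrc, stepSrc_mem_verts _ hs'⟩)
                    (hno (((G.Development γ)).stepSrc s))
              · exact absurd (Finset.mem_inter.mpr ⟨hsrc, stepSrc_mem_verts _ hs⟩)
                  (hno' (((G.Development γ)).stepSrc s))
            have hinV0 := walk_stay hstep hwWalk hwmem hu
            exact hno _ (Finset.mem_inter.mpr ⟨hinV0, hx⟩)
          obtain ⟨y, hy⟩ := hkey
          rw [Finset.mem_inter] at hy
          have hy1' : devShift 1 y ∈ (G.Development γ).verts (C.image (devShiftE 1)) := by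
            rw [← hm01]; exact Finset.mem_image_of_mem _ hy.1
          have hy2' : devShift 1 y ∈ (G.Development γ).verts (C.image (devShiftE 2)) := by
            rw [← hm12]; exact Finset.mem_image_of_mem _ hy.2
          have hyin : devShift 1 y ∈ ((G.Development γ).verts C ∪
              (G.Development γ).verts (C.image (devShiftE 1))) ∩
              (G.Development γ).verts (C.image (devShiftE 2)) :=
            Finset.mem_inter.mpr ⟨Finset.mem_union_right _ hy1', hy2'⟩
          have hc01 := Finset.card_union_add_card_inter ((G.Development γ).verts C)
            ((G.Development γ).verts (C.image (devShiftE 1)))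
          have hpos1 : 1 ≤ ((G.Development γ).verts C ∩
              (G.Development γ).verts (C.image (devShiftE 1))).card :=
            Finset.card_pos.mpr ⟨y, Finset.mem_inter.mpr hy⟩
          have hc012 := Finset.card_union_add_card_inter
            ((G.Development γ).verts C ∪ (G.Development γ).verts (C.image (devShiftE 1)))
            ((G.Development γ).verts (C.image (devShiftE 2)))
          have hpos2 : 1 ≤ (((G.Development γ).verts C ∪
              (G.Development γ).verts (C.image (devShiftE 1))) ∩
              (G.Development γ).verts (C.image (devShiftE 2))).card :=
            Finset.card_pos.mpr ⟨_, hyin⟩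
          rw [hvO, hOcard3]
          omega
  -- cardinality bookkeeping for the quotient
  have hOcard' : O.card = 3 * (O.image Prod.fst).card := O_card hO
  have hVO' : ((G.Development γ).verts O).card = 3 * (G.verts (O.image Prod.fst)).card :=
    verts_O_card G γ hO
  refine ⟨by omega, ?_, by omega⟩
  -- non-trivial image: otherwise the development of π(O) would be disconnected
  intro hTriv
  obtain ⟨s₀, hs₀⟩ := hCne
  have heO : (s₀.1, s₀.2) ∈ O := (mem_O_iff hO s₀.1 s₀.2).mpr ⟨s₀.2, by simpa using hs₀⟩
  have heπ : s₀.1 ∈ O.image Prod.fst := Finset.mem_image_of_mem Prod.fst heO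
  have hu : G.tail s₀.1 ∈ G.verts (O.image Prod.fst) := tail_mem_verts G heπ
  have hm0 : ((G.tail s₀.1, (0 : ZMod 3)) : V × ZMod 3) ∈ (G.Development γ).verts O :=
    (mem_verts_O G γ hO _ _).mpr hu
  have hm1 : ((G.tail s₀.1, (1 : ZMod 3)) : V × ZMod 3) ∈ (G.Development γ).verts O :=
    (mem_verts_O G γ hO _ _).mpr hu
  obtain ⟨w, hwWalk, hwmem, _⟩ := hOconn _ hm0 _ hm1
  obtain ⟨hpw, hprho⟩ := proj_walk G γ hwWalk
  have hmem' : ∀ s ∈ w.map (fun s => (s.1.1, s.2)), s.1 ∈ O.image Prod.fst := by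
    intro s hs
    obtain ⟨s', hs', rfl⟩ := List.mem_map.mp hs
    exact Finset.mem_image_of_mem _ (hwmem s' hs')
  have hz := rho_closed_eq_zero hTriv (w.map (fun s => (s.1.1, s.2))).length
    (w.map (fun s => (s.1.1, s.2))) (G.tail s₀.1) le_rfl hpw hmem'
  rw [hz] at hprho
  have h01 : (0 : ZMod 3) = 1 := by simpa using hprho
  exact absurd h01 (by decide)
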